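/- For every nonnegative integer n, the sum over k from 0 to n of H_{n−k}/((k+1)(k+2)) equals (n/(n+2))·H_{n+1}. -/

import Mathlib

/-- The `n`-th harmonic number `H_n = ∑_{k=1}^n 1/k`, with `H_0 = 0`. -/
def H (n : ℕ) : ℚ := ∑ k ∈ Finset.range n, 1 / ((k : ℚ) + 1)

/-- The generalized harmonic number of order 2, `H_n^{(2)} = ∑_{k=1}^n 1/k^2`, with `H_0^{(2)} = 0`. -/
def H2 (n : ℕ) : ℚ := ∑ k ∈ Finset.range n, 1 / ((k : ℚ) + 1) ^ 2

lemma H_succ (n : ℕ) : H (n + 1) = H n + 1 / ((n : ℚ) + 1) := by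
  simp [H, Finset.sum_range_succ]

lemma s2 (n : ℕ) :
    ∑ k ∈ Finset.range (n + 1), 1 / ((k : ℚ) + 2) = H (n + 1) + 1 / ((n : ℚ) + 2) - 1 := by
  have h1 : H (n + 2) = ∑ k ∈ Finset.range (n + 1), 1 / ((k : ℚ) + 2) + 1 := by
    rw [H, Finset.sum_range_succ']
    push_cast
    ring_nf
  have h2 : H (n + 2) = H (n + 1) + 1 / ((n : ℚ) + 2) := by
    rw [H_succ]; push_cast; ring_nf
  linarith [h1, h2]

lemma s3 (n : ℕ) :
    ∑ k ∈ Finset.range (n + 1), 1 / (((n - k : ℕ) : ℚ) + 1) = H (n + 1) := by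
  have h := Finset.sum_range_reflect (fun j => 1 / ((j : ℚ) + 1)) (n + 1)
  simpa [H] using h

theorem stmt_17 (n : ℕ) :
    ∑ k ∈ Finset.range (n + 1), H (n - k) / (((k : ℚ) + 1) * ((k : ℚ) + 2)) =
      ((n : ℚ) / ((n : ℚ) + 2)) * H (n + 1) := by
  induction n with
  | zero => simp [H]
  | succ n ih =>
    have hn2 : ((n : ℚ) + 2) ≠ 0 := by positivity
    have hn3 : ((n : ℚ) + 3) ≠ 0 := by positivity
    have key : ∀ k ∈ Finset.range (n + 1),
        H (n + 1 - k) / (((k : ℚ) + 1) * ((k : ℚ) + 2)) =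
        H (n - k) / (((k : ℚ) + 1) * ((k : ℚ) + 2))
          + (1 / (((n : ℚ) + 2) * ((k : ℚ) + 1)) - 1 / (((n : ℚ) + 3) * ((k : ℚ) + 2))
             + 1 / (((n : ℚ) + 2) * ((n : ℚ) + 3)) * (1 / (((n - k : ℕ) : ℚ) + 1))) := by
      intro k hk
      have hk' : k ≤ n := Nat.lt_succ_iff.mp (Finset.mem_range.mp hk)
      have h1 : n + 1 - k = (n - k) + 1 := by omega
      have h2 : ((n - k : ℕ) : ℚ) = (n : ℚ) - (k : ℚ) := by
        push_cast [Nat.cast_sub hk']; ring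
      rw [h1, H_succ, h2]
      have hk1 : ((k : ℚ) + 1) ≠ 0 := by positivity
      have hk2 : ((k : ℚ) + 2) ≠ 0 := by positivity
      have hm : ((n : ℚ) - (k : ℚ) + 1) ≠ 0 := by
        have : (k : ℚ) ≤ (n : ℚ) := by exact_mod_cast hk'
        linarith
      field_simp
      ring
    have split := Finset.sum_congr rfl key
    rw [Finset.sum_range_succ]
    have h0 : H (n + 1 - (n + 1)) = 0 := by simp [H]
    rw [h0, split, Finset.sum_add_distrib, ih]
    have e : ∑ k ∈ Finset.range (n + 1),
        (1 / (((n : ℚ) + 2) * ((k : ℚ) + 1)) - 1 / (((n : ℚ) + 3) * ((k : ℚ) + 2))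
          + 1 / (((n : ℚ) + 2) * ((n : ℚ) + 3)) * (1 / (((n - k : ℕ) : ℚ) + 1))) =
        (1 / ((n : ℚ) + 2)) * H (n + 1)
          - (1 / ((n : ℚ) + 3)) * (H (n + 1) + 1 / ((n : ℚ) + 2) - 1)
          + 1 / (((n : ℚ) + 2) * ((n : ℚ) + 3)) * H (n + 1) := by
      rw [Finset.sum_add_distrib, Finset.sum_sub_distrib, ← Finset.mul_sum, s3]
      congr 1
      congr 1
      · rw [H, Finset.mul_sum]
        exact Finset.sum_congr rfl fun k _ => by rw [div_mul_div_comm, one_mul]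
      · rw [← s2 n, Finset.mul_sum]
        exact Finset.sum_congr rfl fun k _ => by rw [div_mul_div_comm, one_mul]
    rw [e]
    have hHn2 : H (n + 2) = H (n + 1) + 1 / ((n : ℚ) + 2) := by
      rw [H_succ]; push_cast; ring_nf
    have hcast : ((n : ℚ) + 1 + 2) = (n : ℚ) + 3 := by ring
    push_cast
    rw [hHn2]
    field_simp
    ring
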